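/- Let A be an abelian group, M a (possibly non-abelian) multiplicative group, and s : A → M a function for which there is a map c : A × A → M such that s(a+b) = s(a)·s(b)·c(a,b) for all a, b ∈ A, every value c(a,b) is central in M, and c is biadditive (c(a+a′,b) = c(a,b)c(a′,b) and c(a,b+b′) = c(a,b)c(a,b′)). Then for every integer r and every a ∈ A, s(r·a) = s(a)^r · c(a,a)^{r(r−1)/2}. -/

import Mathlib

/-- Let `A` be an abelian group, `M` a (possibly non-abelian) group,
and `s : A → M` a function admitting a central, biadditive cross-effect `c` with
`s(a+b) = s(a)·s(b)·c(a,b)`.  Then for every integer `r` and every `a ∈ A`,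
`s(r·a) = s(a)^r · c(a,a)^{r(r−1)/2}`. -/
theorem smul_splitting_formula {A M : Type*} [AddCommGroup A] [Group M]
    (s : A → M) (c : A → A → M)
    (hsc : ∀ a b : A, s (a + b) = s a * s b * c a b)
    (hcent : ∀ a b : A, c a b ∈ Subgroup.center M)
    (hlin_left : ∀ a a' b : A, c (a + a') b = c a b * c a' b)
    (hlin_right : ∀ a b b' : A, c a (b + b') = c a b * c a b') :
    ∀ (r : ℤ) (a : A), s (r • a) = s a ^ r * c a a ^ (r * (r - 1) / 2) := by
  have hc0 : ∀ b : A, c 0 b = 1 := by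
    intro b
    have := hlin_left 0 0 b
    simpa using (mul_left_cancel (a := c 0 b) (by simpa using this.symm))
  have hcneg : ∀ a b : A, c (-a) b = (c a b)⁻¹ := by
    intro a b
    have h := hlin_left a (-a) b
    rw [add_neg_cancel, hc0] at h
    exact eq_inv_of_mul_eq_one_right h.symm
  have hczsmul : ∀ (r : ℤ) (a b : A), c (r • a) b = c a b ^ r := by
    intro r a b
    induction r using Int.induction_on with
    | zero => simpa using hc0 b
    | succ n ih =>
      rw [add_smul, hlin_left, ih, one_smul, zpow_add, zpow_one]
    | pred n ih =>
      rw [sub_smul, sub_eq_add_neg, hlin_left, ih, one_smul, hcneg]; group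
  have hs0 : s 0 = 1 := by
    have := hsc 0 0
    rw [add_zero, hc0, mul_one] at this
    exact (mul_left_cancel (a := s 0) (by simpa using this.symm))
  intro r a
  have hcc : Commute (s a) (c a a) := Subgroup.mem_center_iff.mp (hcent a a) (s a)
  have hcom : ∀ k : ℤ, Commute (s a) (c a a ^ k) := fun k => hcc.zpow_right k
  induction r using Int.induction_on with
  | zero => simp [hs0]
  | succ n ih =>
    have key : s (((n : ℤ) + 1) • a) = s ((n : ℤ) • a) * s a * c a a ^ (n : ℤ) := by
      rw [add_smul, one_smul, hsc, hczsmul]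
    rw [key, ih]
    set e : ℤ := (n : ℤ) * ((n : ℤ) - 1) / 2 with he
    have hexp : ((n : ℤ) + 1) * ((n : ℤ) + 1 - 1) / 2 = e + (n : ℤ) := by
      have h1 : ((n : ℤ) + 1) * ((n : ℤ) + 1 - 1) = (n : ℤ) * ((n : ℤ) - 1) + 2 * n := by ring
      omega
    rw [hexp]
    calc s a ^ (n : ℤ) * c a a ^ e * s a * c a a ^ (n : ℤ)
        = s a ^ (n : ℤ) * (c a a ^ e * s a) * c a a ^ (n : ℤ) := by
          rw [mul_assoc (s a ^ (n : ℤ))]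
      _ = s a ^ (n : ℤ) * (s a * c a a ^ e) * c a a ^ (n : ℤ) := by
          rw [← (hcom e).eq]
      _ = s a ^ ((n : ℤ) + 1) * c a a ^ (e + (n : ℤ)) := by group
  | pred n ih =>
    have key : s ((-(n : ℤ)) • a) = s ((-(n : ℤ) - 1) • a) * s a * c a a ^ (-(n : ℤ) - 1) := by
      conv_lhs => rw [show (-(n : ℤ)) • a = (-(n : ℤ) - 1) • a + a by
        rw [sub_smul, one_smul]; abel]
      rw [hsc, hczsmul]
    have h2 : s ((-(n : ℤ) - 1) • a)
        = s ((-(n : ℤ)) • a) * (c a a ^ (-(n : ℤ) - 1))⁻¹ * (s a)⁻¹ := by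
      rw [key]; group
    rw [h2, ih]
    set E : ℤ := (-(n : ℤ)) * (-(n : ℤ) - 1) / 2 with hE
    have hexp : (-(n : ℤ) - 1) * (-(n : ℤ) - 1 - 1) / 2 = E - (-(n : ℤ) - 1) := by
      have h1 : (-(n : ℤ) - 1) * (-(n : ℤ) - 1 - 1)
          = (-(n : ℤ)) * (-(n : ℤ) - 1) + 2 * ((n : ℤ) + 1) := by ring
      omega
    rw [hexp]
    calc s a ^ (-(n : ℤ)) * c a a ^ E * (c a a ^ (-(n : ℤ) - 1))⁻¹ * (s a)⁻¹
        = s a ^ (-(n : ℤ)) * c a a ^ (E - (-(n : ℤ) - 1)) * (s a)⁻¹ := by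
          group
      _ = s a ^ (-(n : ℤ)) * ((s a)⁻¹ * c a a ^ (E - (-(n : ℤ) - 1))) := by
          rw [mul_assoc, ← ((hcom (E - (-(n : ℤ) - 1))).inv_left).eq]
      _ = s a ^ (-(n : ℤ) - 1) * c a a ^ (E - (-(n : ℤ) - 1)) := by group
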